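/- Let γ > γ_m > 1. Fix e_t > 0. Among all pairs (e_r, e_s) with e_r > 0, e_s > 0 and e_r + e_s = e_t, the function ς(e_r, e_s) = C_v ln( ((γ-γ_m)/(γ-1))·(e_t/e_s)·( ((γ_m-1)/(γ-γ_m))·(e_s/e_r) )^{(γ_m-1)/(γ-1)} ) with C_v > 0 attains its unique global minimum, equal to 0, at e_r = ((γ_m-1)/(γ-1)) e_t, e_s = ((γ-γ_m)/(γ-1)) e_t, and ς > 0 elsewhere. -/

import Mathlib

lemma gibbs_log_lower (c r : ℝ) (hc : 0 < c) (hr : 0 < r) :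
    1 - r / c ≤ Real.log (c / r) := by
  have h := Real.log_le_sub_one_of_pos (div_pos hr hc)
  rw [Real.log_div hr.ne' hc.ne'] at h
  rw [Real.log_div hc.ne' hr.ne']
  linarith

lemma gibbs_log_lower_strict (c r : ℝ) (hc : 0 < c) (hr : 0 < r) (hne : r ≠ c) :
    1 - r / c < Real.log (c / r) := by
  have hne' : r / c ≠ 1 := by
    intro h
    apply hne
    field_simp at h
    exact h
  have h := Real.log_lt_sub_one_of_pos (div_pos hr hc) hne'
  rw [Real.log_div hr.ne' hc.ne'] at h
  rw [Real.log_div hc.ne' hr.ne']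
  linarith

/-- Variational (Gibbs-lemma) principle: among all splittings `e_t = e_r + e_s` with
`e_r, e_s > 0`, the entropy correction `ς` attains its unique global minimum, equal to `0`,
at the Maxwellian equilibrium `e_r = ((γ_m-1)/(γ-1)) e_t`, `e_s = ((γ-γ_m)/(γ-1)) e_t`,
and `ς > 0` elsewhere. -/
theorem stmt_12 (γ γm Cv et : ℝ) (h1 : 1 < γm) (h2 : γm < γ) (hCv : 0 < Cv)
    (het : 0 < et) :
    (Cv * Real.log (((γ - γm) / (γ - 1)) * (et / (((γ - γm) / (γ - 1)) * et)) *
        (((γm - 1) / (γ - γm)) * ((((γ - γm) / (γ - 1)) * et) / (((γm - 1) / (γ - 1)) * et)))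
          ^ ((γm - 1) / (γ - 1))) = 0) ∧
    ∀ er es : ℝ, 0 < er → 0 < es → er + es = et →
      (er, es) ≠ (((γm - 1) / (γ - 1)) * et, ((γ - γm) / (γ - 1)) * et) →
      0 < Cv * Real.log (((γ - γm) / (γ - 1)) * (et / es) *
        (((γm - 1) / (γ - γm)) * (es / er)) ^ ((γm - 1) / (γ - 1))) := by
  have hγ1 : (0:ℝ) < γ - 1 := by linarith
  have hγm1 : (0:ℝ) < γm - 1 := by linarith
  have hγγm : (0:ℝ) < γ - γm := by linarith
  set a := (γm - 1) / (γ - 1) with ha_def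
  set b := (γ - γm) / (γ - 1) with hb_def
  have ha : 0 < a := div_pos hγm1 hγ1
  have hb : 0 < b := div_pos hγγm hγ1
  have hab : a + b = 1 := by
    rw [ha_def, hb_def]; field_simp; ring
  have hq : (γm - 1) / (γ - γm) = a / b := by
    rw [ha_def, hb_def]; field_simp
  constructor
  · have h1' : et / (b * et) = 1 / b := by
      rw [mul_comm, ← div_div, div_self het.ne']
    have h2' : (γm - 1) / (γ - γm) * (b * et / (a * et)) = 1 := by
      rw [hq]; field_simp
    rw [h1', h2', Real.one_rpow]
    have h3' : b * (1 / b) * 1 = 1 := by field_simp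
    rw [h3', Real.log_one, mul_zero]
  · intro er es her hes hsum hne
    have h1 : er ≠ a * et := by
      intro h
      apply hne
      have hes' : es = b * et := by
        have : a * et + b * et = et := by rw [← add_mul, hab, one_mul]
        linarith
      rw [Prod.ext_iff]; exact ⟨h, hes'⟩
    have h2' : es ≠ b * et := by
      intro h
      apply h1
      have : a * et + b * et = et := by rw [← add_mul, hab, one_mul]
      linarith
    have hpa : 0 < a * et := mul_pos ha het
    have hpb : 0 < b * et := mul_pos hb het
    have hX2 : 0 < (γm - 1) / (γ - γm) * (es / er) := by
      rw [hq]; exact mul_pos (div_pos ha hb) (div_pos hes her)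
    have hX1 : 0 < b * (et / es) := mul_pos hb (div_pos het hes)
    have hlog : Real.log (b * (et / es) *
        ((γm - 1) / (γ - γm) * (es / er)) ^ a)
        = a * Real.log (a * et / er) + b * Real.log (b * et / es) := by
      rw [Real.log_mul hX1.ne' (Real.rpow_pos_of_pos hX2 a).ne',
          Real.log_rpow hX2, hq,
          Real.log_mul hb.ne' (div_pos het hes).ne',
          Real.log_mul (div_pos ha hb).ne' (div_pos hes her).ne',
          Real.log_div ha.ne' hb.ne',
          Real.log_div het.ne' hes.ne', Real.log_div hes.ne' her.ne',
          Real.log_div hpa.ne' her.ne', Real.log_div hpb.ne' hes.ne',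
          Real.log_mul ha.ne' het.ne', Real.log_mul hb.ne' het.ne']
      linear_combination (-(Real.log b + Real.log et - Real.log es)) * hab
    have B1 : 1 - er / (a * et) < Real.log (a * et / er) :=
      gibbs_log_lower_strict _ _ hpa her h1
    have B2 : 1 - es / (b * et) < Real.log (b * et / es) :=
      gibbs_log_lower_strict _ _ hpb hes h2'
    have c1 : a * (1 - er / (a * et)) = a - er / et := by
      field_simp
    have c2 : b * (1 - es / (b * et)) = b - es / et := by
      field_simp
    have hsum' : er / et + es / et = 1 := by
      rw [← add_div, hsum, div_self het.ne']
    have hpos : 0 < a * Real.log (a * et / er) + b * Real.log (b * et / es) := by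
      nlinarith [mul_lt_mul_of_pos_left B1 ha, mul_lt_mul_of_pos_left B2 hb]
    apply mul_pos hCv
    rw [hlog]
    exact hpos
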